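/- For every integer n ≥ 2, the game n·↑ + * is equivalent to the game {0 | (n−1)·↑}. -/

import Mathlib

universe u

namespace SetTheory

/-- Pre-games, as in Mathlib's former `SetTheory.PGame` (removed from Mathlib). -/
inductive PGame : Type (u + 1)
  | mk : ∀ α β : Type u, (α → PGame) → (β → PGame) → PGame

namespace PGame

def LeftMoves : PGame → Type u
  | mk l _ _ _ => l

def RightMoves : PGame → Type u
  | mk _ r _ _ => r

def moveLeft : ∀ g : PGame, LeftMoves g → PGame
  | mk _l _ L _ => L

def moveRight : ∀ g : PGame, RightMoves g → PGame
  | mk _ _r _ R => R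

inductive IsOption : PGame → PGame → Prop
  | moveLeft {x : PGame} (i : x.LeftMoves) : IsOption (x.moveLeft i) x
  | moveRight {x : PGame} (i : x.RightMoves) : IsOption (x.moveRight i) x

theorem wf_isOption : WellFounded IsOption :=
  ⟨fun x => by
    induction x with
    | mk l r L R IHl IHr =>
      refine ⟨_, fun y h => ?_⟩
      cases h with
      | moveLeft i => exact IHl i
      | moveRight j => exact IHr j⟩

instance : WellFoundedRelation PGame :=
  ⟨IsOption, wf_isOption⟩

instance : Zero PGame :=
  ⟨⟨PEmpty, PEmpty, PEmpty.elim, PEmpty.elim⟩⟩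

instance : One PGame :=
  ⟨⟨PUnit, PEmpty, fun _ => 0, PEmpty.elim⟩⟩

def ofLists (L R : List PGame.{u}) : PGame.{u} :=
  mk (ULift (Fin L.length)) (ULift (Fin R.length)) (fun i => L.get i.down) fun j => R.get j.down

def star : PGame.{u} :=
  ⟨PUnit, PUnit, fun _ => 0, fun _ => 0⟩

def neg : PGame → PGame
  | ⟨l, r, L, R⟩ => ⟨r, l, fun i => neg (R i), fun i => neg (L i)⟩

instance : Neg PGame :=
  ⟨neg⟩

theorem isOption_mk_left {xl xr : Type u} (xL : xl → PGame) (xR : xr → PGame) (i : xl) :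
    IsOption (xL i) (mk xl xr xL xR) :=
  IsOption.moveLeft (x := mk xl xr xL xR) i

theorem isOption_mk_right {xl xr : Type u} (xL : xl → PGame) (xR : xr → PGame) (i : xr) :
    IsOption (xR i) (mk xl xr xL xR) :=
  IsOption.moveRight (x := mk xl xr xL xR) i

def add : PGame.{u} → PGame.{u} → PGame.{u}
  | mk xl xr xL xR, mk yl yr yL yR =>
    mk (xl ⊕ yl) (xr ⊕ yr)
      (Sum.rec (fun i => add (xL i) (mk yl yr yL yR)) fun i => add (mk xl xr xL xR) (yL i))
      (Sum.rec (fun i => add (xR i) (mk yl yr yL yR)) fun i => add (mk xl xr xL xR) (yR i))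
termination_by x y => (x, y)
decreasing_by
  all_goals first
    | exact Prod.Lex.left _ _ (isOption_mk_left _ _ _)
    | exact Prod.Lex.left _ _ (isOption_mk_right _ _ _)
    | exact Prod.Lex.right _ (isOption_mk_left _ _ _)
    | exact Prod.Lex.right _ (isOption_mk_right _ _ _)

instance : Add PGame.{u} :=
  ⟨add⟩

/-- The pair (`x ≤ y`, `x ⧏ y`), defined by simultaneous induction as in former Mathlib. -/
noncomputable def leLF (x y : PGame.{u}) : Prop × Prop := by
  induction x generalizing y with | mk xl xr xL xR IHxl IHxr => _
  induction y with | mk yl yr yL yR IHyl IHyr => _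
  exact ((∀ i, (IHxl i (mk yl yr yL yR)).2) ∧ ∀ j, (IHyr j).2,
    (∃ i, (IHyl i).1) ∨ ∃ j, (IHxr j (mk yl yr yL yR)).1)

noncomputable instance : LE PGame :=
  ⟨fun x y => (leLF x y).1⟩

instance : LT PGame :=
  ⟨fun x y => x ≤ y ∧ ¬y ≤ x⟩

def Equiv (x y : PGame) : Prop :=
  x ≤ y ∧ y ≤ x

instance : HasEquiv PGame :=
  ⟨Equiv⟩

end PGame

end SetTheory
open SetTheory PGame
open scoped PGame

/-- The game up, ↑ = {0 | *}. -/
def upG : PGame := ofLists [0] [star]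

/-- The game down, ↓ = {* | 0}. -/
def downG : PGame := ofLists [star] [0]

/-- `copies n G` is the disjunctive sum of `n` copies of `G`. -/
def copies : ℕ → PGame → PGame
  | 0, _ => 0
  | n + 1, G => copies n G + G

/-- A game is dicotic (all-small) if either it has no options for either player, or
both players have at least one option and every option is dicotic. -/
def Dicotic (G : PGame) : Prop :=
  (IsEmpty G.LeftMoves ∧ IsEmpty G.RightMoves ∨
    Nonempty G.LeftMoves ∧ Nonempty G.RightMoves) ∧
    (∀ i, Dicotic (G.moveLeft i)) ∧ ∀ j, Dicotic (G.moveRight j)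
termination_by G
decreasing_by
  · exact .moveLeft _
  · exact .moveRight _

/-- The dicotic transformation δ: every empty option set is replaced by the single option 0. -/
def delta : PGame → PGame
  | PGame.mk l r L R =>
    PGame.mk (l ⊕ PLift (IsEmpty l)) (r ⊕ PLift (IsEmpty r))
      (Sum.rec (fun i => delta (L i)) fun _ => 0)
      (Sum.rec (fun j => delta (R j)) fun _ => 0)

/-- A game is infinitesimal if every positive multiple lies strictly between -1 and 1. -/
def Infinitesimal (G : PGame) : Prop :=
  ∀ n : ℕ, 0 < n → copies n G < 1 ∧ -1 < copies n G

namespace SetTheory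

namespace PGame

def LF (x y : PGame) : Prop := (leLF x y).2

infix:50 " ⧏ " => SetTheory.PGame.LF

theorem le_iff_forall_lf {x y : PGame} :
    x ≤ y ↔ (∀ i, x.moveLeft i ⧏ y) ∧ ∀ j, x ⧏ y.moveRight j := by
  cases x; cases y; exact Iff.rfl

theorem lf_iff_exists_le {x y : PGame} :
    x ⧏ y ↔ (∃ i, x ≤ y.moveLeft i) ∨ ∃ j, x.moveRight j ≤ y := by
  cases x; cases y; exact Iff.rfl

theorem not_le_lf (x y : PGame) : (¬ x ≤ y ↔ y ⧏ x) ∧ (¬ x ⧏ y ↔ y ≤ x) := by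
  induction x generalizing y with
  | mk xl xr xL xR IHxl IHxr =>
  induction y with
  | mk yl yr yL yR IHyl IHyr =>
  rw [le_iff_forall_lf, lf_iff_exists_le, lf_iff_exists_le, le_iff_forall_lf]
  constructor
  · rw [not_and_or, not_forall, not_forall]
    exact or_congr (exists_congr fun i => (IHxl i _).2) (exists_congr fun j => (IHyr j).2)
  · rw [not_or, not_exists, not_exists]
    exact and_congr (forall_congr' fun i => (IHyl i).1) (forall_congr' fun j => (IHxr j _).1)

theorem not_le {x y : PGame} : ¬ x ≤ y ↔ y ⧏ x := (not_le_lf x y).1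

theorem not_lf {x y : PGame} : ¬ x ⧏ y ↔ y ≤ x := (not_le_lf x y).2

theorem le_of_forall_lf {x y : PGame} (h₁ : ∀ i, x.moveLeft i ⧏ y)
    (h₂ : ∀ j, x ⧏ y.moveRight j) : x ≤ y :=
  le_iff_forall_lf.2 ⟨h₁, h₂⟩

theorem lf_of_le_moveLeft {x y : PGame} {i : y.LeftMoves} (h : x ≤ y.moveLeft i) : x ⧏ y :=
  lf_iff_exists_le.2 (Or.inl ⟨i, h⟩)

theorem lf_of_moveRight_le {x y : PGame} {j : x.RightMoves} (h : x.moveRight j ≤ y) : x ⧏ y :=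
  lf_iff_exists_le.2 (Or.inr ⟨j, h⟩)

theorem moveLeft_lf_of_le {x y : PGame} (h : x ≤ y) (i : x.LeftMoves) : x.moveLeft i ⧏ y :=
  (le_iff_forall_lf.1 h).1 i

theorem lf_moveRight_of_le {x y : PGame} (h : x ≤ y) (j : y.RightMoves) : x ⧏ y.moveRight j :=
  (le_iff_forall_lf.1 h).2 j

theorem le_refl' (x : PGame) : x ≤ x := by
  induction x with
  | mk _ _ _ _ IHl IHr =>
    exact le_of_forall_lf (fun i => lf_of_le_moveLeft (i := i) (IHl i))
      (fun j => lf_of_moveRight_le (j := j) (IHr j))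

theorem le_trans_aux {x y z : PGame}
    (h₁ : ∀ {i}, y ≤ z → z ≤ x.moveLeft i → y ≤ x.moveLeft i)
    (h₂ : ∀ {j}, z.moveRight j ≤ x → x ≤ y → z.moveRight j ≤ y) (hxy : x ≤ y) (hyz : y ≤ z) :
    x ≤ z :=
  le_of_forall_lf (fun i => not_le.1 fun h => not_lf.2 (h₁ hyz h) (moveLeft_lf_of_le hxy i))
    fun j => not_le.1 fun h => not_lf.2 (h₂ h hxy) (lf_moveRight_of_le hyz j)

theorem le_trans_all (x y z : PGame) :
    (x ≤ y → y ≤ z → x ≤ z) ∧ (y ≤ z → z ≤ x → y ≤ x) ∧ (z ≤ x → x ≤ y → z ≤ y) := by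
  induction x generalizing y z with
  | mk xl xr xL xR IHxl IHxr =>
  induction y generalizing z with
  | mk yl yr yL yR IHyl IHyr =>
  induction z with
  | mk zl zr zL zR IHzl IHzr =>
  exact ⟨le_trans_aux (fun {i} => (IHxl i _ _).2.1) fun {j} => (IHzr j).2.2,
    le_trans_aux (fun {i} => (IHyl i _).2.2) fun {j} => (IHxr j _ _).1,
    le_trans_aux (fun {i} => (IHzl i).1) fun {j} => (IHyr j _).2.1⟩

instance : Preorder PGame :=
  { le := (· ≤ ·)
    lt := (· < ·)
    le_refl := le_refl'
    le_trans := fun x y z => (le_trans_all x y z).1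
    lt_iff_le_not_ge := fun _ _ => Iff.rfl }

theorem equiv_def {x y : PGame} : x ≈ y ↔ x ≤ y ∧ y ≤ x := Iff.rfl

theorem equiv_rfl {x : PGame} : x ≈ x := equiv_def.2 ⟨le_rfl, le_rfl⟩

theorem Equiv.symm {x y : PGame} (h : x ≈ y) : y ≈ x :=
  equiv_def.2 ⟨(equiv_def.1 h).2, (equiv_def.1 h).1⟩

theorem Equiv.trans {x y z : PGame} (h1 : x ≈ y) (h2 : y ≈ z) : x ≈ z :=
  equiv_def.2 ⟨le_trans (equiv_def.1 h1).1 (equiv_def.1 h2).1,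
    le_trans (equiv_def.1 h2).2 (equiv_def.1 h1).2⟩

instance : @Trans PGame PGame PGame HasEquiv.Equiv HasEquiv.Equiv HasEquiv.Equiv :=
  ⟨fun h1 h2 => Equiv.trans h1 h2⟩

theorem le_congr_imp {x₁ y₁ x₂ y₂ : PGame} (hx : x₁ ≈ x₂) (hy : y₁ ≈ y₂) (h : x₁ ≤ y₁) :
    x₂ ≤ y₂ :=
  le_trans (equiv_def.1 hx).2 (le_trans h (equiv_def.1 hy).1)

theorem le_congr {x₁ y₁ x₂ y₂ : PGame} (hx : x₁ ≈ x₂) (hy : y₁ ≈ y₂) : x₁ ≤ y₁ ↔ x₂ ≤ y₂ :=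
  ⟨le_congr_imp hx hy, le_congr_imp (Equiv.symm hx) (Equiv.symm hy)⟩

theorem le_congr_left {x₁ x₂ y : PGame} (hx : x₁ ≈ x₂) : x₁ ≤ y ↔ x₂ ≤ y :=
  le_congr hx equiv_rfl

theorem le_congr_right {x y₁ y₂ : PGame} (hy : y₁ ≈ y₂) : x ≤ y₁ ↔ x ≤ y₂ :=
  le_congr equiv_rfl hy

theorem lf_congr {x₁ y₁ x₂ y₂ : PGame} (hx : x₁ ≈ x₂) (hy : y₁ ≈ y₂) : x₁ ⧏ y₁ ↔ x₂ ⧏ y₂ := by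
  rw [← not_le, ← not_le, le_congr hy hx]

theorem lf_congr_left {x₁ x₂ y : PGame} (hx : x₁ ≈ x₂) : x₁ ⧏ y ↔ x₂ ⧏ y :=
  lf_congr hx equiv_rfl

theorem le_lf_trans {x y z : PGame} (h₁ : x ≤ y) (h₂ : y ⧏ z) : x ⧏ z :=
  not_le.1 fun h => not_le.2 h₂ (le_trans h h₁)

theorem lf_le_trans {x y z : PGame} (h₁ : x ⧏ y) (h₂ : y ≤ z) : x ⧏ z :=
  not_le.1 fun h => not_le.2 h₁ (le_trans h₂ h)

theorem le_of_forall_exists {x y : PGame} (h₁ : ∀ i, ∃ i', x.moveLeft i ≤ y.moveLeft i')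
    (h₂ : ∀ j, ∃ j', x.moveRight j' ≤ y.moveRight j) : x ≤ y :=
  le_of_forall_lf
    (fun i => (h₁ i).elim fun i' h => le_lf_trans h (moveLeft_lf_of_le le_rfl i'))
    (fun j => (h₂ j).elim fun j' h => lf_le_trans (lf_moveRight_of_le le_rfl j') h)

theorem zero_le_lf {x : PGame} : 0 ≤ x ↔ ∀ j, 0 ⧏ x.moveRight j := by
  rw [le_iff_forall_lf]
  exact ⟨fun h => h.2, fun h => ⟨fun i => PEmpty.elim i, h⟩⟩

theorem star_moveLeft (x) : star.moveLeft x = 0 := rfl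

theorem star_moveRight (x) : star.moveRight x = 0 := rfl

theorem zero_lf_star : 0 ⧏ star := lf_of_le_moveLeft (i := PUnit.unit) le_rfl

theorem ofLists_moveLeft' {L R : List PGame} (i : (ofLists L R).LeftMoves) :
    (ofLists L R).moveLeft i = L.get i.down := rfl

theorem ofLists_moveRight' {L R : List PGame} (i : (ofLists L R).RightMoves) :
    (ofLists L R).moveRight i = R.get i.down := rfl

theorem mk_add_mk (xl xr : Type u) (xL : xl → PGame) (xR : xr → PGame)
    (yl yr : Type u) (yL : yl → PGame) (yR : yr → PGame) :
    mk xl xr xL xR + mk yl yr yL yR = mk (xl ⊕ yl) (xr ⊕ yr)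
      (Sum.rec (fun i => xL i + mk yl yr yL yR) fun i => mk xl xr xL xR + yL i)
      (Sum.rec (fun i => xR i + mk yl yr yL yR) fun i => mk xl xr xL xR + yR i) := by
  show add _ _ = _
  rw [add]
  rfl

theorem leftMoves_add (x y : PGame) : (x + y).LeftMoves = (x.LeftMoves ⊕ y.LeftMoves) := by
  cases x; cases y; rw [mk_add_mk]; rfl

theorem rightMoves_add (x y : PGame) : (x + y).RightMoves = (x.RightMoves ⊕ y.RightMoves) := by
  cases x; cases y; rw [mk_add_mk]; rfl

def toLeftMovesAdd {x y : PGame} : x.LeftMoves ⊕ y.LeftMoves ≃ (x + y).LeftMoves :=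
  _root_.Equiv.cast (leftMoves_add x y).symm

def toRightMovesAdd {x y : PGame} : x.RightMoves ⊕ y.RightMoves ≃ (x + y).RightMoves :=
  _root_.Equiv.cast (rightMoves_add x y).symm

theorem moveLeft_cast {G H : PGame} (e : G = H) (i : G.LeftMoves) :
    H.moveLeft (cast (congrArg LeftMoves e) i) = G.moveLeft i := by
  subst e; rfl

theorem moveRight_cast {G H : PGame} (e : G = H) (i : G.RightMoves) :
    H.moveRight (cast (congrArg RightMoves e) i) = G.moveRight i := by
  subst e; rfl

theorem add_moveLeft_inl (x y : PGame) (i : x.LeftMoves) :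
    (x + y).moveLeft (toLeftMovesAdd (Sum.inl i)) = x.moveLeft i + y := by
  cases x; cases y
  exact moveLeft_cast (mk_add_mk ..).symm (Sum.inl i)

theorem add_moveLeft_inr (x y : PGame) (i : y.LeftMoves) :
    (x + y).moveLeft (toLeftMovesAdd (Sum.inr i)) = x + y.moveLeft i := by
  cases x; cases y
  exact moveLeft_cast (mk_add_mk ..).symm (Sum.inr i)

theorem add_moveRight_inl (x y : PGame) (i : x.RightMoves) :
    (x + y).moveRight (toRightMovesAdd (Sum.inl i)) = x.moveRight i + y := by
  cases x; cases y
  exact moveRight_cast (mk_add_mk ..).symm (Sum.inl i)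

theorem add_moveRight_inr (x y : PGame) (i : y.RightMoves) :
    (x + y).moveRight (toRightMovesAdd (Sum.inr i)) = x + y.moveRight i := by
  cases x; cases y
  exact moveRight_cast (mk_add_mk ..).symm (Sum.inr i)

theorem exists_toLeftMovesAdd {x y : PGame} (k : (x + y).LeftMoves) :
    ∃ s, toLeftMovesAdd s = k := ⟨_, _root_.Equiv.apply_symm_apply _ k⟩

theorem exists_toRightMovesAdd {x y : PGame} (k : (x + y).RightMoves) :
    ∃ s, toRightMovesAdd s = k := ⟨_, _root_.Equiv.apply_symm_apply _ k⟩

theorem leftMoves_add_cases {x y : PGame} (k : (x + y).LeftMoves)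
    {P : (x + y).LeftMoves → Prop}
    (hl : ∀ i, P (toLeftMovesAdd (Sum.inl i))) (hr : ∀ i, P (toLeftMovesAdd (Sum.inr i))) :
    P k := by
  obtain ⟨i | i, rfl⟩ := exists_toLeftMovesAdd k
  exacts [hl i, hr i]

theorem rightMoves_add_cases {x y : PGame} (k : (x + y).RightMoves)
    {P : (x + y).RightMoves → Prop}
    (hl : ∀ i, P (toRightMovesAdd (Sum.inl i))) (hr : ∀ i, P (toRightMovesAdd (Sum.inr i))) :
    P k := by
  obtain ⟨i | i, rfl⟩ := exists_toRightMovesAdd k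
  exacts [hl i, hr i]

theorem add_zero_equiv (x : PGame) : x + 0 ≈ x := by
  induction x with
  | mk xl xr xL xR IHl IHr =>
  refine equiv_def.2 ⟨le_of_forall_exists (fun k => ?_) (fun j => ?_),
    le_of_forall_exists (fun i => ?_) (fun k => ?_)⟩
  · obtain ⟨i | i, rfl⟩ := exists_toLeftMovesAdd k
    · exact ⟨i, by rw [add_moveLeft_inl]; exact (equiv_def.1 (IHl i)).1⟩
    · exact PEmpty.elim i
  · exact ⟨toRightMovesAdd (Sum.inl j), by rw [add_moveRight_inl]; exact (equiv_def.1 (IHr j)).1⟩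
  · exact ⟨toLeftMovesAdd (Sum.inl i), by rw [add_moveLeft_inl]; exact (equiv_def.1 (IHl i)).2⟩
  · obtain ⟨j | j, rfl⟩ := exists_toRightMovesAdd k
    · exact ⟨j, by rw [add_moveRight_inl]; exact (equiv_def.1 (IHr j)).2⟩
    · exact PEmpty.elim j

theorem add_comm_le (x y : PGame) : x + y ≤ y + x := by
  induction x generalizing y with
  | mk xl xr xL xR IHxl IHxr =>
  induction y with
  | mk yl yr yL yR IHyl IHyr =>
  refine le_of_forall_exists (fun k => ?_) (fun k => ?_)
  · obtain ⟨i | i, rfl⟩ := exists_toLeftMovesAdd k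
    · exact ⟨toLeftMovesAdd (Sum.inr i), by
        rw [add_moveLeft_inl, add_moveLeft_inr]; exact IHxl i _⟩
    · exact ⟨toLeftMovesAdd (Sum.inl i), by
        rw [add_moveLeft_inr, add_moveLeft_inl]; exact IHyl i⟩
  · obtain ⟨j | j, rfl⟩ := exists_toRightMovesAdd k
    · exact ⟨toRightMovesAdd (Sum.inr j), by
        rw [add_moveRight_inl, add_moveRight_inr]; exact IHyr j⟩
    · exact ⟨toRightMovesAdd (Sum.inl j), by
        rw [add_moveRight_inr, add_moveRight_inl]; exact IHxr j _⟩

theorem add_comm_equiv {x y : PGame} : x + y ≈ y + x :=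
  equiv_def.2 ⟨add_comm_le x y, add_comm_le y x⟩

theorem add_assoc_le (x y z : PGame) :
    x + y + z ≤ x + (y + z) ∧ x + (y + z) ≤ x + y + z := by
  induction x generalizing y z with
  | mk xl xr xL xR IHx IHxr =>
  induction y generalizing z with
  | mk yl yr yL yR IHy IHyr =>
  induction z with
  | mk zl zr zL zR IHz IHzr =>
  refine ⟨le_of_forall_exists (fun k => ?_) (fun k => ?_),
    le_of_forall_exists (fun k => ?_) (fun k => ?_)⟩
  · obtain ⟨k | i, rfl⟩ := exists_toLeftMovesAdd k
    · obtain ⟨i | i, rfl⟩ := exists_toLeftMovesAdd k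
      · exact ⟨toLeftMovesAdd (Sum.inl i), by
          rw [add_moveLeft_inl, add_moveLeft_inl, add_moveLeft_inl]; exact (IHx i _ _).1⟩
      · exact ⟨toLeftMovesAdd (Sum.inr (toLeftMovesAdd (Sum.inl i))), by
          rw [add_moveLeft_inl, add_moveLeft_inr, add_moveLeft_inr, add_moveLeft_inl]
          exact (IHy i _).1⟩
    · exact ⟨toLeftMovesAdd (Sum.inr (toLeftMovesAdd (Sum.inr i))), by
        rw [add_moveLeft_inr, add_moveLeft_inr, add_moveLeft_inr]; exact (IHz i).1⟩
  · obtain ⟨i | k, rfl⟩ := exists_toRightMovesAdd k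
    · exact ⟨toRightMovesAdd (Sum.inl (toRightMovesAdd (Sum.inl i))), by
        rw [add_moveRight_inl, add_moveRight_inl, add_moveRight_inl]; exact (IHxr i _ _).1⟩
    · obtain ⟨i | i, rfl⟩ := exists_toRightMovesAdd k
      · exact ⟨toRightMovesAdd (Sum.inl (toRightMovesAdd (Sum.inr i))), by
          rw [add_moveRight_inr, add_moveRight_inl, add_moveRight_inl, add_moveRight_inr]
          exact (IHyr i _).1⟩
      · exact ⟨toRightMovesAdd (Sum.inr i), by
          rw [add_moveRight_inr, add_moveRight_inr, add_moveRight_inr]; exact (IHzr i).1⟩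
  · obtain ⟨i | k, rfl⟩ := exists_toLeftMovesAdd k
    · exact ⟨toLeftMovesAdd (Sum.inl (toLeftMovesAdd (Sum.inl i))), by
        rw [add_moveLeft_inl, add_moveLeft_inl, add_moveLeft_inl]; exact (IHx i _ _).2⟩
    · obtain ⟨i | i, rfl⟩ := exists_toLeftMovesAdd k
      · exact ⟨toLeftMovesAdd (Sum.inl (toLeftMovesAdd (Sum.inr i))), by
          rw [add_moveLeft_inr, add_moveLeft_inl, add_moveLeft_inl, add_moveLeft_inr]
          exact (IHy i _).2⟩
      · exact ⟨toLeftMovesAdd (Sum.inr i), by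
          rw [add_moveLeft_inr, add_moveLeft_inr, add_moveLeft_inr]; exact (IHz i).2⟩
  · obtain ⟨k | i, rfl⟩ := exists_toRightMovesAdd k
    · obtain ⟨i | i, rfl⟩ := exists_toRightMovesAdd k
      · exact ⟨toRightMovesAdd (Sum.inl i), by
          rw [add_moveRight_inl, add_moveRight_inl, add_moveRight_inl]; exact (IHxr i _ _).2⟩
      · exact ⟨toRightMovesAdd (Sum.inr (toRightMovesAdd (Sum.inl i))), by
          rw [add_moveRight_inl, add_moveRight_inr, add_moveRight_inr, add_moveRight_inl]
          exact (IHyr i _).2⟩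
    · exact ⟨toRightMovesAdd (Sum.inr (toRightMovesAdd (Sum.inr i))), by
        rw [add_moveRight_inr, add_moveRight_inr, add_moveRight_inr]; exact (IHzr i).2⟩

theorem add_assoc_equiv {x y z : PGame} : x + y + z ≈ x + (y + z) :=
  equiv_def.2 (add_assoc_le x y z)

theorem add_le_lf_right (x y z : PGame) :
    (x ≤ y → x + z ≤ y + z) ∧ (x ⧏ y → x + z ⧏ y + z) := by
  induction x generalizing y z with
  | mk xl xr xL xR IHxl IHxr =>
  induction y generalizing z with
  | mk yl yr yL yR IHyl IHyr =>
  induction z with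
  | mk zl zr zL zR IHzl IHzr =>
  constructor
  · intro h
    refine le_of_forall_lf (fun k => ?_) (fun k => ?_)
    · obtain ⟨i | i, rfl⟩ := exists_toLeftMovesAdd k
      · rw [add_moveLeft_inl]; exact (IHxl i _ _).2 (moveLeft_lf_of_le h i)
      · rw [add_moveLeft_inr]
        exact lf_of_le_moveLeft (i := toLeftMovesAdd (Sum.inr i))
          (by rw [add_moveLeft_inr]; exact (IHzl i).1 h)
    · obtain ⟨j | j, rfl⟩ := exists_toRightMovesAdd k
      · rw [add_moveRight_inl]; exact (IHyr j _).2 (lf_moveRight_of_le h j)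
      · rw [add_moveRight_inr]
        exact lf_of_moveRight_le (j := toRightMovesAdd (Sum.inr j))
          (by rw [add_moveRight_inr]; exact (IHzr j).1 h)
  · intro h
    rcases lf_iff_exists_le.1 h with ⟨i, hi⟩ | ⟨j, hj⟩
    · exact lf_of_le_moveLeft (i := toLeftMovesAdd (Sum.inl i))
        (by rw [add_moveLeft_inl]; exact (IHyl i _).1 hi)
    · exact lf_of_moveRight_le (j := toRightMovesAdd (Sum.inl j))
        (by rw [add_moveRight_inl]; exact (IHxr j _ _).1 hj)

theorem pg_add_le_add_right {x y : PGame} (h : x ≤ y) (z : PGame) : x + z ≤ y + z :=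
  (add_le_lf_right x y z).1 h

theorem pg_add_le_add_left {x y : PGame} (h : x ≤ y) (z : PGame) : z + x ≤ z + y :=
  le_trans (add_comm_le z x) (le_trans (pg_add_le_add_right h z) (add_comm_le y z))

instance : AddLeftMono PGame :=
  ⟨fun z _ _ h => pg_add_le_add_left h z⟩

theorem add_congr_left {x y z : PGame} (h : x ≈ y) : x + z ≈ y + z :=
  equiv_def.2 ⟨pg_add_le_add_right (equiv_def.1 h).1 z, pg_add_le_add_right (equiv_def.1 h).2 z⟩

theorem add_congr_right {x y z : PGame} (h : y ≈ z) : x + y ≈ x + z :=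
  equiv_def.2 ⟨pg_add_le_add_left (equiv_def.1 h).1 x, pg_add_le_add_left (equiv_def.1 h).2 x⟩

theorem neg_mk (l r : Type u) (L : l → PGame) (R : r → PGame) :
    -mk l r L R = mk r l (fun i => -R i) (fun i => -L i) := by
  show neg _ = _
  rw [neg]
  rfl

theorem add_neg_cancel_both (x : PGame) : x + -x ≤ 0 ∧ 0 ≤ x + -x := by
  induction x with
  | mk l r L R IHl IHr =>
  rw [neg_mk]
  constructor
  · refine le_of_forall_lf (fun k => ?_) (fun j => PEmpty.elim j)
    obtain ⟨i | j, rfl⟩ := exists_toLeftMovesAdd k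
    · rw [add_moveLeft_inl]
      refine lf_of_moveRight_le (j := toRightMovesAdd (Sum.inr i)) ?_
      erw [add_moveRight_inr]
      exact (IHl i).1
    · rw [add_moveLeft_inr]
      refine lf_of_moveRight_le (j := toRightMovesAdd (Sum.inl j)) ?_
      erw [add_moveRight_inl]
      exact (IHr j).1
  · refine le_of_forall_lf (fun i => PEmpty.elim i) (fun k => ?_)
    obtain ⟨j | i, rfl⟩ := exists_toRightMovesAdd k
    · rw [add_moveRight_inl]
      refine lf_of_le_moveLeft (i := toLeftMovesAdd (Sum.inr j)) ?_
      erw [add_moveLeft_inr]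
      exact (IHr j).2
    · rw [add_moveRight_inr]
      refine lf_of_le_moveLeft (i := toLeftMovesAdd (Sum.inl i)) ?_
      erw [add_moveLeft_inl]
      exact (IHl i).2

theorem add_neg_cancel_le_zero (x : PGame) : x + -x ≤ 0 := (add_neg_cancel_both x).1

theorem zero_le_add_neg_cancel (x : PGame) : 0 ≤ x + -x := (add_neg_cancel_both x).2

theorem neg_zero' : -(0 : PGame) = 0 := by
  show neg (mk PEmpty PEmpty PEmpty.elim PEmpty.elim) = mk PEmpty PEmpty PEmpty.elim PEmpty.elim
  rw [neg]
  congr 1 <;> funext i <;> exact PEmpty.elim i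

theorem neg_star : -star = star := by
  show neg star = star
  unfold star
  rw [neg]
  congr 1 <;> funext _ <;> exact neg_zero'

end PGame

end SetTheory

def upL : upG.{u}.LeftMoves := ULift.up ⟨0, by simp⟩
def upR : upG.{u}.RightMoves := ULift.up ⟨0, by simp⟩
def stR : star.{u}.RightMoves := PUnit.unit
def stL : star.{u}.LeftMoves := PUnit.unit
def HR (m : ℕ) : (ofLists [0] [copies m upG.{u}]).RightMoves := ULift.up ⟨0, by simp⟩
def HL (m : ℕ) : (ofLists [0] [copies m upG.{u}]).LeftMoves := ULift.up ⟨0, by simp⟩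

lemma upG_moveLeft (i : upG.{u}.LeftMoves) : upG.{u}.moveLeft i = 0 := by
  show (ofLists [0] [star]).moveLeft i = 0
  erw [ofLists_moveLeft']
  simp

lemma upG_moveRight (j : upG.{u}.RightMoves) : upG.{u}.moveRight j = star := by
  show (ofLists [0] [star]).moveRight j = star
  erw [ofLists_moveRight']
  simp

lemma H_moveLeft (m : ℕ) (i) : (ofLists [0] [copies m upG.{u}]).moveLeft i = 0 := by
  rw [ofLists_moveLeft']; simp

lemma H_moveRight (m : ℕ) (j) : (ofLists [0] [copies m upG.{u}]).moveRight j = copies m upG.{u} := by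
  rw [ofLists_moveRight']; simp

lemma copies_succ (k : ℕ) : copies (k+1) upG.{u} = copies k upG.{u} + upG.{u} := rfl

lemma zero_le_upG : 0 ≤ upG.{u} := by
  rw [zero_le_lf]; intro j; rw [upG_moveRight]; exact zero_lf_star

lemma star_add_star_equiv : star.{u} + star ≈ (0 : PGame) := by
  have h : star + -star ≈ (0 : PGame) :=
    ⟨add_neg_cancel_le_zero star, zero_le_add_neg_cancel star⟩
  rwa [neg_star] at h

lemma zero_le_copies (k : ℕ) : 0 ≤ copies k upG.{u} := by
  induction k with
  | zero => exact le_rfl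
  | succ k ih =>
    rw [copies_succ]
    calc (0:PGame) ≤ copies k upG.{u} := ih
    _ ≤ copies k upG.{u} + upG.{u} := by
        refine (le_congr_left (add_zero_equiv (copies k upG.{u}))).1 ?_
        exact add_le_add_right zero_le_upG _

lemma copies_le_copies {k m : ℕ} (h : k ≤ m) : copies k upG.{u} ≤ copies m upG.{u} := by
  induction m with
  | zero => exact le_of_eq (by rw [Nat.le_zero.mp h])
  | succ m ih =>
    rcases Nat.lt_or_ge k (m+1) with h' | h'
    · calc copies k upG.{u} ≤ copies m upG.{u} := ih (by omega)
      _ ≤ copies m upG.{u} + upG.{u} := by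
          refine (le_congr_left (add_zero_equiv (copies m upG.{u}))).1 ?_
          exact add_le_add_right zero_le_upG _
    · have : k = m + 1 := by omega
      subst this; exact le_rfl

lemma copies_moveLeft : ∀ (k : ℕ) (i : (copies k upG.{u}).LeftMoves),
    (copies k upG.{u}).moveLeft i ≈ copies (k-1) upG.{u} := by
  intro k
  induction k with
  | zero => exact fun i => PEmpty.elim i
  | succ k ih =>
    rw [copies_succ]
    intro i
    refine leftMoves_add_cases (P := fun i => (copies k upG.{u} + upG.{u}).moveLeft i ≈ copies (k + 1 - 1) upG.{u}) i ?_ ?_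
    · intro i
      rw [add_moveLeft_inl]
      cases k with
      | zero => exact PEmpty.elim i
      | succ k =>
        refine PGame.Equiv.trans (add_congr_left (ih i)) ?_
        simp only [Nat.add_sub_cancel]
        exact equiv_rfl
    · intro i
      rw [add_moveLeft_inr, upG_moveLeft]
      simpa using add_zero_equiv (copies k upG.{u})

lemma copies_moveRight : ∀ (k : ℕ) (j : (copies k upG.{u}).RightMoves),
    (copies k upG.{u}).moveRight j ≈ copies (k-1) upG.{u} + star := by
  intro k
  induction k with
  | zero => exact fun j => PEmpty.elim j
  | succ k ih =>
    rw [copies_succ]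
    intro j
    refine rightMoves_add_cases (P := fun j => (copies k upG.{u} + upG.{u}).moveRight j ≈ copies (k + 1 - 1) upG.{u} + star) j ?_ ?_
    · intro j
      rw [add_moveRight_inl]
      cases k with
      | zero => exact PEmpty.elim j
      | succ k =>
        refine PGame.Equiv.trans (add_congr_left (ih j)) ?_
        simp only [Nat.add_sub_cancel]
        -- (copies k + star) + upG.{u} ≈ (copies k + upG.{u}) + star
        calc copies k upG.{u} + star + upG.{u}
            ≈ copies k upG.{u} + (star + upG.{u}) := add_assoc_equiv
          _ ≈ copies k upG.{u} + (upG.{u} + star) := add_congr_right add_comm_equiv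
          _ ≈ copies k upG.{u} + upG.{u} + star := PGame.Equiv.symm add_assoc_equiv
    · intro j
      rw [add_moveRight_inr, upG_moveRight]
      exact equiv_rfl

lemma copies_moveRight_add_star (k : ℕ) (j : (copies k upG.{u}).RightMoves) :
    (copies k upG.{u}).moveRight j + star ≈ copies (k-1) upG.{u} := by
  refine PGame.Equiv.trans (add_congr_left (copies_moveRight k j)) ?_
  calc copies (k-1) upG.{u} + star + star
      ≈ copies (k-1) upG.{u} + (star + star) := add_assoc_equiv
    _ ≈ copies (k-1) upG.{u} + 0 := add_congr_right star_add_star_equiv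
    _ ≈ copies (k-1) upG.{u} := add_zero_equiv _

lemma key : ∀ k : ℕ,
    (∀ m, k < m → copies k upG.{u} ≤ ofLists [0] [copies m upG.{u}]) ∧
    (∀ m, k ≤ m → copies k upG.{u} + star ≤ ofLists [0] [copies m upG.{u}]) ∧
    (∀ m, k ≤ m → 1 ≤ m → copies k upG.{u} + star ⧏ ofLists [0] [copies m upG.{u}]) ∧
    (∀ m, k ≤ m + 1 → copies k upG.{u} ⧏ ofLists [0] [copies m upG.{u}]) := by
  intro k
  induction k with
  | zero =>
    have hR' : ∀ m : ℕ, copies 0 upG.{u} ⧏ ofLists [0] [copies m upG.{u}] := by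
      intro m
      refine lf_of_le_moveLeft (i := HL m) ?_
      rw [H_moveLeft]
      exact le_rfl
    have hP : ∀ m : ℕ, 0 < m → copies 0 upG.{u} ≤ ofLists [0] [copies m upG.{u}] := by
      intro m hm
      refine le_of_forall_lf (fun i => PEmpty.elim i) (fun j => ?_)
      rw [H_moveRight]
      cases m with
      | zero => omega
      | succ t =>
        refine lf_of_le_moveLeft (i := toLeftMovesAdd (Sum.inr upL)) ?_
        refine (le_congr_right (copies_moveLeft (t+1) _)).2 ?_
        exact copies_le_copies (by omega)
    refine ⟨fun m hm => hP m hm, ?_, ?_, fun m _ => hR' m⟩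
    · intro m _
      refine le_of_forall_lf ?_ ?_
      · intro i
        refine leftMoves_add_cases
          (P := fun i => (copies 0 upG.{u} + star).moveLeft i ⧏ ofLists [0] [copies m upG.{u}]) i ?_ ?_
        · exact fun i => PEmpty.elim i
        · intro i
          rw [add_moveLeft_inr, star_moveLeft]
          exact (lf_congr_left (add_zero_equiv _)).2 (hR' m)
      · intro j
        rw [H_moveRight]
        refine lf_of_moveRight_le (j := toRightMovesAdd (Sum.inr stR)) ?_
        rw [add_moveRight_inr, star_moveRight]
        exact (le_congr_left (add_zero_equiv _)).2 (zero_le_copies m)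
    · intro m _ hm
      refine lf_of_moveRight_le (j := toRightMovesAdd (Sum.inr stR)) ?_
      rw [add_moveRight_inr, star_moveRight]
      exact (le_congr_left (add_zero_equiv _)).2 (hP m hm)
  | succ k ih =>
    obtain ⟨ihP, ihQ, ihR, ihR'⟩ := ih
    have hR' : ∀ m : ℕ, k + 1 ≤ m + 1 → copies (k+1) upG.{u} ⧏ ofLists [0] [copies m upG.{u}] := by
      intro m hm
      rw [copies_succ]
      refine lf_of_moveRight_le (j := toRightMovesAdd (Sum.inr upR)) ?_
      rw [add_moveRight_inr, upG_moveRight]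
      exact ihQ m (by omega)
    have hP : ∀ m : ℕ, k + 1 < m → copies (k+1) upG.{u} ≤ ofLists [0] [copies m upG.{u}] := by
      intro m hm
      refine le_of_forall_lf ?_ ?_
      · intro i
        refine (lf_congr_left (copies_moveLeft (k+1) i)).2 ?_
        simp only [Nat.add_sub_cancel]
        exact ihR' m (by omega)
      · intro j
        rw [H_moveRight]
        cases m with
        | zero => omega
        | succ t =>
          refine lf_of_le_moveLeft (i := toLeftMovesAdd (Sum.inr upL)) ?_
          refine (le_congr_right (copies_moveLeft (t+1) _)).2 ?_
          exact copies_le_copies (by omega)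
    have hQ : ∀ m : ℕ, k + 1 ≤ m → copies (k+1) upG.{u} + star ≤ ofLists [0] [copies m upG.{u}] := by
      intro m hm
      refine le_of_forall_lf ?_ ?_
      · intro i
        refine leftMoves_add_cases
          (P := fun i => (copies (k+1) upG.{u} + star).moveLeft i ⧏ ofLists [0] [copies m upG.{u}])
          i ?_ ?_
        · intro i
          rw [add_moveLeft_inl]
          refine (lf_congr_left (add_congr_left (copies_moveLeft (k+1) i))).2 ?_
          simp only [Nat.add_sub_cancel]
          exact ihR m (by omega) (by omega)
        · intro i
          rw [add_moveLeft_inr, star_moveLeft]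
          exact (lf_congr_left (add_zero_equiv _)).2 (hR' m (by omega))
      · intro j
        rw [H_moveRight]
        refine lf_of_moveRight_le (j := toRightMovesAdd (Sum.inr stR)) ?_
        rw [add_moveRight_inr, star_moveRight]
        exact (le_congr_left (add_zero_equiv _)).2 (copies_le_copies hm)
    have hR : ∀ m : ℕ, k + 1 ≤ m → 1 ≤ m →
        copies (k+1) upG.{u} + star ⧏ ofLists [0] [copies m upG.{u}] := by
      intro m hm _
      refine lf_of_moveRight_le
        (j := toRightMovesAdd (Sum.inl (toRightMovesAdd (Sum.inr upR)))) ?_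
      erw [add_moveRight_inl]
      refine (le_congr_left (copies_moveRight_add_star (k+1) _)).2 ?_
      simp only [Nat.add_sub_cancel]
      exact ihP m (by omega)
    exact ⟨hP, hQ, hR, hR'⟩

theorem stmt3 : ∀ n : ℕ, 2 ≤ n →
    copies n upG + star ≈ ofLists [0] [copies (n - 1) upG] := by
  intro n hn
  obtain ⟨m, rfl⟩ : ∃ m, n = m + 1 := ⟨n - 1, by omega⟩
  simp only [Nat.add_sub_cancel]
  obtain ⟨-, -, hRm, -⟩ := key m
  obtain ⟨-, -, -, hR'⟩ := key (m + 1)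
  constructor
  · refine le_of_forall_lf ?_ ?_
    · intro i
      refine leftMoves_add_cases
        (P := fun i => (copies (m+1) upG + star).moveLeft i ⧏ ofLists [0] [copies m upG]) i ?_ ?_
      · intro i
        rw [add_moveLeft_inl]
        refine (lf_congr_left (add_congr_left (copies_moveLeft (m+1) i))).2 ?_
        simp only [Nat.add_sub_cancel]
        exact hRm m le_rfl (by omega)
      · intro i
        rw [add_moveLeft_inr, star_moveLeft]
        exact (lf_congr_left (add_zero_equiv _)).2 (hR' m (by omega))
    · intro j
      rw [H_moveRight]
      refine lf_of_moveRight_le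
        (j := toRightMovesAdd (Sum.inl (toRightMovesAdd (Sum.inr upR)))) ?_
      erw [add_moveRight_inl]
      refine (le_congr_left (copies_moveRight_add_star (m+1) _)).2 ?_
      simp only [Nat.add_sub_cancel]
      exact le_rfl
  · refine le_of_forall_lf ?_ ?_
    · intro i
      rw [H_moveLeft]
      refine lf_of_le_moveLeft (i := toLeftMovesAdd (Sum.inr stL)) ?_
      rw [add_moveLeft_inr, star_moveLeft]
      exact (le_congr_right (add_zero_equiv _)).2 (zero_le_copies _)
    · intro j
      refine rightMoves_add_cases
        (P := fun j => ofLists [0] [copies m upG] ⧏ (copies (m+1) upG + PGame.star).moveRight j) j ?_ ?_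
      · intro j
        rw [add_moveRight_inl]
        refine lf_of_moveRight_le (j := HR m) ?_
        rw [H_moveRight]
        refine (le_congr_right (copies_moveRight_add_star (m+1) j)).2 ?_
        simp only [Nat.add_sub_cancel]
        exact le_rfl
      · intro j
        rw [add_moveRight_inr, star_moveRight]
        refine lf_of_moveRight_le (j := HR m) ?_
        rw [H_moveRight]
        exact (le_congr_right (add_zero_equiv _)).2 (copies_le_copies (by omega))
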